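/- Let B = (B_1, …, B_m), C = (C_1, …, C_n), Y, Z = (Z_1, …, Z_n) and Λ be random variables on a probability space, each taking values in a finite type. Suppose: (i) Λ is (unconditionally) independent of the pair (Y, Z); (ii) B is conditionally independent of Z given Λ; (iii) the pair (B, C) is conditionally independent of Y given the pair (Z, Λ); (iv) for each i, C_i is conditionally independent of the tuple (C_j)_{j ≠ i} given (Z, Λ); (v) for each i, C_i is conditionally independent of the tuple (Z_j)_{j ≠ i} given (Z_i, Λ); (vi) the tuple B is determined by Λ, i.e. B = f ∘ Λ for some function f. Then for all values b, c, y, z with P(Y = y, Z = z) > 0: P(B = b, C = c | Y = y, Z = z) = Σ_λ P(Λ = λ) · ( Π_{j=1}^n P(C_j = c_j | Z_j = z_j, Λ = λ) ) · ( Π_{k=1}^m P(B_k = b_k | Λ = λ) ), where the sum ranges over all λ with P(Λ = λ) > 0 (all conditional probabilities on the right are well defined since, by (i), P(Z_j = z_j, Λ = λ) > 0 for such λ). -/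

import Mathlib

open MeasureTheory

/-- Conditional probability `P(s | t) = P(s ∩ t) / P(t)`. -/
noncomputable def condProb {Ω : Type*} [MeasurableSpace Ω] (P : Measure Ω)
    (s t : Set Ω) : ENNReal :=
  P (s ∩ t) / P t

/-- `X` is conditionally independent of `Y` given `Z`: for all values `x, y, z` with
`P(Z = z) > 0`, `P(X = x, Y = y | Z = z) = P(X = x | Z = z) · P(Y = y | Z = z)`. -/
def CondIndepFun {Ω α β γ : Type*} [MeasurableSpace Ω] (P : Measure Ω)
    (X : Ω → α) (Y : Ω → β) (Z : Ω → γ) : Prop :=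
  ∀ (x : α) (y : β) (z : γ), 0 < P {ω | Z ω = z} →
    condProb P {ω | X ω = x ∧ Y ω = y} {ω | Z ω = z} =
      condProb P {ω | X ω = x} {ω | Z ω = z} * condProb P {ω | Y ω = y} {ω | Z ω = z}

open scoped Classical

lemma partition_sum {Ω α : Type*} [MeasurableSpace Ω] (P : Measure Ω) [Fintype α]
    (X : Ω → α) (E : Set Ω) (hE : MeasurableSet E)
    (hX : ∀ a, MeasurableSet {ω | X ω = a}) :
    P E = ∑ a : α, P (E ∩ {ω | X ω = a}) := by
  have h1 : E = ⋃ a, E ∩ {ω | X ω = a} := by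
    ext ω; simp
  have hd : Pairwise (Function.onFun Disjoint (fun a => E ∩ {ω | X ω = a})) := by
    intro a a' haa'
    simp only [Function.onFun, Set.disjoint_left]
    rintro ω ⟨-, h1⟩ ⟨-, h2⟩
    exact haa' (h1 ▸ h2 ▸ rfl)
  conv_lhs => rw [h1]
  rw [measure_iUnion hd (fun a => hE.inter (hX a)), tsum_fintype]

lemma condProb_mul_self {Ω : Type*} [MeasurableSpace Ω] (P : Measure Ω) [IsFiniteMeasure P]
    (s t : Set Ω) (h : P t ≠ 0) : condProb P s t * P t = P (s ∩ t) :=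
  ENNReal.div_mul_cancel h (measure_ne_top P t)

lemma ennreal_mul_div_cancel (a b : ENNReal) (h0 : b ≠ 0) (ht : b ≠ ⊤) : a * b / b = a := by
  rw [mul_comm, mul_comm b a, mul_div_assoc, ENNReal.div_self h0 ht, mul_one]


/-- (Step 4 of the proof of Theorem 1.) From (i) `Λ ⊥ (Y, Z)`,
(ii) `B ⊥ Z | Λ`, (iii) `(B, C) ⊥ Y | (Z, Λ)`, (iv) `C_i ⊥ (C_j)_{j ≠ i} | (Z, Λ)`,
(v) `C_i ⊥ (Z_j)_{j ≠ i} | (Z_i, Λ)`, and (vi) `B` determined by `Λ`, it follows that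
`P(B = b, C = c | Y = y, Z = z)
  = Σ_λ P(Λ = λ) · Π_j P(C_j = c_j | Z_j = z_j, Λ = λ) · Π_k P(B_k = b_k | Λ = λ)`. -/
theorem step4_factorisation
    {Ω υ γ : Type*} {m n : ℕ} {β : Fin m → Type*} {χ ζ : Fin n → Type*}
    [MeasurableSpace Ω]
    [∀ k, Fintype (β k)] [∀ k, MeasurableSpace (β k)] [∀ k, MeasurableSingletonClass (β k)]
    [∀ j, Fintype (χ j)] [∀ j, MeasurableSpace (χ j)] [∀ j, MeasurableSingletonClass (χ j)]
    [∀ j, Fintype (ζ j)] [∀ j, MeasurableSpace (ζ j)] [∀ j, MeasurableSingletonClass (ζ j)]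
    [Fintype υ] [MeasurableSpace υ] [MeasurableSingletonClass υ]
    [Fintype γ] [MeasurableSpace γ] [MeasurableSingletonClass γ]
    (P : Measure Ω) [IsProbabilityMeasure P]
    (B : ∀ k, Ω → β k) (C : ∀ j, Ω → χ j) (Y : Ω → υ) (Z : ∀ j, Ω → ζ j) (Λ : Ω → γ)
    (hB : ∀ k, Measurable (B k)) (hC : ∀ j, Measurable (C j)) (hY : Measurable Y)
    (hZ : ∀ j, Measurable (Z j)) (hΛ : Measurable Λ)
    (h_i : ∀ (l : γ) (y : υ) (z : ∀ j, ζ j),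
      P {ω | Λ ω = l ∧ (Y ω = y ∧ ∀ j, Z j ω = z j)} =
        P {ω | Λ ω = l} * P {ω | Y ω = y ∧ ∀ j, Z j ω = z j})
    (h_ii : CondIndepFun P (fun ω => fun k => B k ω) (fun ω => fun j => Z j ω) Λ)
    (h_iii : CondIndepFun P
      (fun ω => ((fun k => B k ω : ∀ k, β k), (fun j => C j ω : ∀ j, χ j))) Y
      (fun ω => ((fun j => Z j ω : ∀ j, ζ j), Λ ω)))
    (h_iv : ∀ i : Fin n,
      CondIndepFun P (C i) (fun ω => fun j : {j : Fin n // j ≠ i} => C j ω)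
        (fun ω => ((fun j => Z j ω : ∀ j, ζ j), Λ ω)))
    (h_v : ∀ i : Fin n,
      CondIndepFun P (C i) (fun ω => fun j : {j : Fin n // j ≠ i} => Z j ω)
        (fun ω => (Z i ω, Λ ω)))
    (f : γ → ∀ k, β k) (h_vi : ∀ ω k, B k ω = f (Λ ω) k) :
    ∀ (b : ∀ k, β k) (c : ∀ j, χ j) (y : υ) (z : ∀ j, ζ j),
      0 < P {ω | Y ω = y ∧ ∀ j, Z j ω = z j} →
      condProb P {ω | (∀ k, B k ω = b k) ∧ ∀ j, C j ω = c j}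
          {ω | Y ω = y ∧ ∀ j, Z j ω = z j} =
        ∑ l ∈ Finset.univ.filter (fun l : γ => 0 < P {ω | Λ ω = l}),
          P {ω | Λ ω = l} *
            (∏ j, condProb P {ω | C j ω = c j} {ω | Z j ω = z j ∧ Λ ω = l}) *
            (∏ k, condProb P {ω | B k ω = b k} {ω | Λ ω = l}) := by
  intro b c y z hEpos
  have hPt : ∀ s : Set Ω, P s ≠ ⊤ := fun s => measure_ne_top P s
  have mC : ∀ (j : Fin n) (a : χ j), MeasurableSet {ω | C j ω = a} :=
    fun j a => hC j (measurableSet_singleton a)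
  have mZm : ∀ (j : Fin n) (a : ζ j), MeasurableSet {ω | Z j ω = a} :=
    fun j a => hZ j (measurableSet_singleton a)
  have mYm : ∀ a : υ, MeasurableSet {ω | Y ω = a} := fun a => hY (measurableSet_singleton a)
  have mLm : ∀ l : γ, MeasurableSet {ω | Λ ω = l} := fun l => hΛ (measurableSet_singleton l)
  have mBm : ∀ (k : Fin m) (a : β k), MeasurableSet {ω | B k ω = a} :=
    fun k a => hB k (measurableSet_singleton a)
  have mTZ : MeasurableSet {ω | ∀ j, Z j ω = z j} := by
    have h : {ω | ∀ j, Z j ω = z j} = ⋂ j, {ω | Z j ω = z j} := by ext ω; simp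
    rw [h]; exact MeasurableSet.iInter fun j => mZm j (z j)
  have mE : MeasurableSet {ω | Y ω = y ∧ ∀ j, Z j ω = z j} := (mYm y).inter mTZ
  have mS : MeasurableSet {ω | (∀ k, B k ω = b k) ∧ ∀ j, C j ω = c j} := by
    have h : {ω | (∀ k, B k ω = b k) ∧ ∀ j, C j ω = c j} =
        (⋂ k, {ω | B k ω = b k}) ∩ ⋂ j, {ω | C j ω = c j} := by ext ω; simp
    rw [h]
    exact (MeasurableSet.iInter fun k => mBm k (b k)).inter
      (MeasurableSet.iInter fun j => mC j (c j))
  have mCset : ∀ Fs : Finset (Fin n), MeasurableSet {ω | ∀ j ∈ Fs, C j ω = c j} := by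
    intro Fs
    have h : {ω | ∀ j ∈ Fs, C j ω = c j} = ⋂ j, ⋂ (_ : j ∈ Fs), {ω | C j ω = c j} := by
      ext ω; simp
    rw [h]; exact MeasurableSet.iInter fun j => MeasurableSet.iInter fun _ => mC j (c j)
  have hE0 : P {ω | Y ω = y ∧ ∀ j, Z j ω = z j} ≠ 0 := hEpos.ne'
  have hTZ0 : P {ω | ∀ j, Z j ω = z j} ≠ 0 := by
    intro h
    exact hE0 (le_antisymm ((measure_mono fun ω hω => hω.2).trans h.le) zero_le)
  have hEL : ∀ l, P ({ω | Y ω = y ∧ ∀ j, Z j ω = z j} ∩ {ω | Λ ω = l}) =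
      P {ω | Λ ω = l} * P {ω | Y ω = y ∧ ∀ j, Z j ω = z j} := by
    intro l
    rw [← h_i l y z]
    congr 1
    ext ω
    simp only [Set.mem_inter_iff, Set.mem_setOf_eq]
    tauto
  have hEL' : ∀ (l : γ) (y' : υ),
      P ({ω | ∀ j, Z j ω = z j} ∩ {ω | Λ ω = l} ∩ {ω | Y ω = y'}) =
        P {ω | Λ ω = l} * P ({ω | ∀ j, Z j ω = z j} ∩ {ω | Y ω = y'}) := by
    intro l y'
    have eA : {ω : Ω | ∀ j, Z j ω = z j} ∩ {ω | Λ ω = l} ∩ {ω | Y ω = y'} =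
        {ω | Λ ω = l ∧ (Y ω = y' ∧ ∀ j, Z j ω = z j)} := by
      ext ω
      simp only [Set.mem_inter_iff, Set.mem_setOf_eq]
      tauto
    have eB : {ω : Ω | ∀ j, Z j ω = z j} ∩ {ω | Y ω = y'} =
        {ω | Y ω = y' ∧ ∀ j, Z j ω = z j} := by
      ext ω
      simp only [Set.mem_inter_iff, Set.mem_setOf_eq]
      tauto
    rw [eA, eB, h_i l y' z]
  have hTZL : ∀ l, P ({ω | ∀ j, Z j ω = z j} ∩ {ω | Λ ω = l}) =
      P {ω | Λ ω = l} * P {ω | ∀ j, Z j ω = z j} := by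
    intro l
    rw [partition_sum P Y ({ω | ∀ j, Z j ω = z j} ∩ {ω | Λ ω = l}) (mTZ.inter (mLm l)) mYm,
      partition_sum P Y {ω | ∀ j, Z j ω = z j} mTZ mYm, Finset.mul_sum]
    exact Finset.sum_congr rfl fun y' _ => hEL' l y'
  have key : ∀ l : γ,
      P ({ω | (∀ k, B k ω = b k) ∧ ∀ j, C j ω = c j} ∩
          {ω | Y ω = y ∧ ∀ j, Z j ω = z j} ∩ {ω | Λ ω = l}) =
        if 0 < P {ω | Λ ω = l} then
          (P {ω | Λ ω = l} *
            (∏ j, condProb P {ω | C j ω = c j} {ω | Z j ω = z j ∧ Λ ω = l}) *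
            (∏ k, condProb P {ω | B k ω = b k} {ω | Λ ω = l})) *
            P {ω | Y ω = y ∧ ∀ j, Z j ω = z j}
        else 0 := by
    intro l
    by_cases hL : P {ω | Λ ω = l} = 0
    · rw [if_neg (by simp [hL])]
      exact measure_mono_null Set.inter_subset_right hL
    rw [if_pos (pos_iff_ne_zero.mpr hL)]
    have hLt := hPt {ω | Λ ω = l}
    have hD := hTZL l
    have hD0 : P ({ω | ∀ j, Z j ω = z j} ∩ {ω | Λ ω = l}) ≠ 0 := by
      rw [hD]; exact mul_ne_zero hL hTZ0
    have hDt := hPt ({ω | ∀ j, Z j ω = z j} ∩ {ω | Λ ω = l})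
    have hTset : {ω | (fun j => Z j ω, Λ ω) = ((z, l) : (∀ j, ζ j) × γ)} =
        {ω | ∀ j, Z j ω = z j} ∩ {ω | Λ ω = l} := by
      ext ω
      simp [Prod.ext_iff, funext_iff, Set.mem_inter_iff]
    have hT3pos : 0 < P {ω | (fun j => Z j ω, Λ ω) = ((z, l) : (∀ j, ζ j) × γ)} := by
      rw [hTset]; exact pos_iff_ne_zero.mpr hD0
    -- step (v): reduce conditioning from (Z, Λ) to (Z_j, Λ)
    have hq : ∀ j : Fin n,
        condProb P {ω | C j ω = c j} ({ω | ∀ j, Z j ω = z j} ∩ {ω | Λ ω = l}) =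
          condProb P {ω | C j ω = c j} {ω | Z j ω = z j ∧ Λ ω = l} := by
      intro j
      have hTj : {ω | (Z j ω, Λ ω) = ((z j, l) : ζ j × γ)} = {ω | Z j ω = z j ∧ Λ ω = l} := by
        ext ω; simp [Prod.ext_iff]
      have hsub : ({ω | ∀ j, Z j ω = z j} ∩ {ω | Λ ω = l}) ⊆ {ω | Z j ω = z j ∧ Λ ω = l} :=
        fun ω hω => ⟨hω.1 j, hω.2⟩
      have hTj0 : P {ω | Z j ω = z j ∧ Λ ω = l} ≠ 0 := fun h =>
        hD0 (le_antisymm ((measure_mono hsub).trans h.le) zero_le)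
      have h5 := h_v j (c j) (fun j' : {j' : Fin n // j' ≠ j} => z j') ((z j, l)) (by
        rw [hTj]; exact pos_iff_ne_zero.mpr hTj0)
      rw [hTj] at h5
      have e1 : {ω | C j ω = c j ∧
            (fun j' : {j' : Fin n // j' ≠ j} => Z j' ω) = fun j' : {j' : Fin n // j' ≠ j} => z j'} ∩
            {ω | Z j ω = z j ∧ Λ ω = l} =
          {ω | C j ω = c j} ∩ ({ω | ∀ j, Z j ω = z j} ∩ {ω | Λ ω = l}) := by
        ext ω
        simp only [Set.mem_inter_iff, Set.mem_setOf_eq, funext_iff]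
        constructor
        · rintro ⟨⟨hc', hzrest⟩, hzj, hl⟩
          refine ⟨hc', fun j'' => ?_, hl⟩
          by_cases hj'' : j'' = j
          · subst hj''; exact hzj
          · exact hzrest ⟨j'', hj''⟩
        · rintro ⟨hc', hall, hl⟩
          exact ⟨⟨hc', fun j' => hall j'⟩, hall j, hl⟩
      have e2 : {ω | (fun j' : {j' : Fin n // j' ≠ j} => Z j' ω) =
            fun j' : {j' : Fin n // j' ≠ j} => z j'} ∩ {ω | Z j ω = z j ∧ Λ ω = l} =
          {ω | ∀ j, Z j ω = z j} ∩ {ω | Λ ω = l} := by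
        ext ω
        simp only [Set.mem_inter_iff, Set.mem_setOf_eq, funext_iff]
        constructor
        · rintro ⟨hzrest, hzj, hl⟩
          refine ⟨fun j'' => ?_, hl⟩
          by_cases hj'' : j'' = j
          · subst hj''; exact hzj
          · exact hzrest ⟨j'', hj''⟩
        · rintro ⟨hall, hl⟩
          exact ⟨fun j' => hall j', hall j, hl⟩
      have h6 : P ({ω | C j ω = c j} ∩ ({ω | ∀ j, Z j ω = z j} ∩ {ω | Λ ω = l})) =
          condProb P {ω | C j ω = c j} {ω | Z j ω = z j ∧ Λ ω = l} *
            P ({ω | ∀ j, Z j ω = z j} ∩ {ω | Λ ω = l}) := by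
        rw [← e1, ← condProb_mul_self P _ _ hTj0, h5, mul_assoc,
          condProb_mul_self P _ _ hTj0, e2]
      show P ({ω | C j ω = c j} ∩ ({ω | ∀ j, Z j ω = z j} ∩ {ω | Λ ω = l})) /
          P ({ω | ∀ j, Z j ω = z j} ∩ {ω | Λ ω = l}) = _
      rw [h6, ennreal_mul_div_cancel _ _ hD0 hDt]
    -- step (iv): factorise the C's
    have hprod : ∀ Fs : Finset (Fin n),
        P ({ω | ∀ j ∈ Fs, C j ω = c j} ∩ ({ω | ∀ j, Z j ω = z j} ∩ {ω | Λ ω = l})) =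
          (∏ j ∈ Fs, condProb P {ω | C j ω = c j}
            ({ω | ∀ j, Z j ω = z j} ∩ {ω | Λ ω = l})) *
            P ({ω | ∀ j, Z j ω = z j} ∩ {ω | Λ ω = l}) := by
      intro Fs
      induction Fs using Finset.induction_on with
      | empty =>
        have h : {ω : Ω | ∀ j ∈ (∅ : Finset (Fin n)), C j ω = c j} = Set.univ := by
          ext ω; simp
        rw [h, Set.univ_inter, Finset.prod_empty, one_mul]
      | @insert i Fs hi ih =>
        have mX : ∀ v : (∀ j : {j : Fin n // j ≠ i}, χ j),
            MeasurableSet {ω | (fun j : {j : Fin n // j ≠ i} => C j ω) = v} := by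
          intro v
          have h : {ω | (fun j : {j : Fin n // j ≠ i} => C j ω) = v} =
              ⋂ j : {j : Fin n // j ≠ i}, {ω | C j ω = v j} := by
            ext ω; simp [funext_iff]
          rw [h]; exact MeasurableSet.iInter fun j => mC j (v j)
        have hv : ∀ v : (∀ j : {j : Fin n // j ≠ i}, χ j),
            P (({ω | ∀ j ∈ insert i Fs, C j ω = c j} ∩
                ({ω | ∀ j, Z j ω = z j} ∩ {ω | Λ ω = l})) ∩
                {ω | (fun j : {j : Fin n // j ≠ i} => C j ω) = v}) =
              condProb P {ω | C i ω = c i} ({ω | ∀ j, Z j ω = z j} ∩ {ω | Λ ω = l}) *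
              P (({ω | ∀ j ∈ Fs, C j ω = c j} ∩
                ({ω | ∀ j, Z j ω = z j} ∩ {ω | Λ ω = l})) ∩
                {ω | (fun j : {j : Fin n // j ≠ i} => C j ω) = v}) := by
          intro v
          by_cases hmatch : ∀ j : {j : Fin n // j ≠ i}, (j : Fin n) ∈ Fs → v j = c j
          · have e1 : ({ω | ∀ j ∈ insert i Fs, C j ω = c j} ∩
                  ({ω | ∀ j, Z j ω = z j} ∩ {ω | Λ ω = l})) ∩
                  {ω | (fun j : {j : Fin n // j ≠ i} => C j ω) = v} =
                {ω | C i ω = c i ∧ (fun j : {j : Fin n // j ≠ i} => C j ω) = v} ∩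
                  ({ω | ∀ j, Z j ω = z j} ∩ {ω | Λ ω = l}) := by
              ext ω
              simp only [Set.mem_inter_iff, Set.mem_setOf_eq, Finset.mem_insert]
              constructor
              · rintro ⟨⟨hall, hT'⟩, hXv⟩
                exact ⟨⟨hall i (Or.inl rfl), hXv⟩, hT'⟩
              · rintro ⟨⟨hci, hXv⟩, hT'⟩
                refine ⟨⟨?_, hT'⟩, hXv⟩
                rintro j (rfl | hjS)
                · exact hci
                · have hne : j ≠ i := fun h => hi (h ▸ hjS)
                  exact (congrFun hXv ⟨j, hne⟩).trans (hmatch ⟨j, hne⟩ hjS)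
            have e2 : ({ω | ∀ j ∈ Fs, C j ω = c j} ∩
                  ({ω | ∀ j, Z j ω = z j} ∩ {ω | Λ ω = l})) ∩
                  {ω | (fun j : {j : Fin n // j ≠ i} => C j ω) = v} =
                {ω | (fun j : {j : Fin n // j ≠ i} => C j ω) = v} ∩
                  ({ω | ∀ j, Z j ω = z j} ∩ {ω | Λ ω = l}) := by
              ext ω
              simp only [Set.mem_inter_iff, Set.mem_setOf_eq]
              constructor
              · rintro ⟨⟨-, hT'⟩, hXv⟩
                exact ⟨hXv, hT'⟩
              · rintro ⟨hXv, hT'⟩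
                refine ⟨⟨?_, hT'⟩, hXv⟩
                intro j hjS
                have hne : j ≠ i := fun h => hi (h ▸ hjS)
                exact (congrFun hXv ⟨j, hne⟩).trans (hmatch ⟨j, hne⟩ hjS)
            have h4 := h_iv i (c i) v ((z, l)) hT3pos
            rw [hTset] at h4
            rw [e1, e2, ← condProb_mul_self P _ _ hD0, h4, mul_assoc,
              condProb_mul_self P _ _ hD0]
          · push_neg at hmatch
            obtain ⟨j, hjS, hjv⟩ := hmatch
            have e1 : ({ω | ∀ j ∈ insert i Fs, C j ω = c j} ∩
                  ({ω | ∀ j, Z j ω = z j} ∩ {ω | Λ ω = l})) ∩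
                  {ω | (fun j : {j : Fin n // j ≠ i} => C j ω) = v} = ∅ := by
              ext ω
              simp only [Set.mem_inter_iff, Set.mem_setOf_eq, Set.mem_empty_iff_false,
                iff_false, not_and]
              rintro ⟨hall, -⟩ hXv
              exact hjv (((congrFun hXv j).symm).trans
                (hall j (Finset.mem_insert_of_mem hjS)))
            have e2 : ({ω | ∀ j ∈ Fs, C j ω = c j} ∩
                  ({ω | ∀ j, Z j ω = z j} ∩ {ω | Λ ω = l})) ∩
                  {ω | (fun j : {j : Fin n // j ≠ i} => C j ω) = v} = ∅ := by
              ext ω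
              simp only [Set.mem_inter_iff, Set.mem_setOf_eq, Set.mem_empty_iff_false,
                iff_false, not_and]
              rintro ⟨hall, -⟩ hXv
              exact hjv (((congrFun hXv j).symm).trans (hall j hjS))
            rw [e1, e2, measure_empty, mul_zero]
        rw [partition_sum P (fun ω => fun j : {j : Fin n // j ≠ i} => C j ω)
            ({ω | ∀ j ∈ insert i Fs, C j ω = c j} ∩
              ({ω | ∀ j, Z j ω = z j} ∩ {ω | Λ ω = l}))
            ((mCset (insert i Fs)).inter (mTZ.inter (mLm l))) mX]
        rw [Finset.sum_congr rfl fun v _ => hv v, ← Finset.mul_sum,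
          ← partition_sum P (fun ω => fun j : {j : Fin n // j ≠ i} => C j ω)
            ({ω | ∀ j ∈ Fs, C j ω = c j} ∩ ({ω | ∀ j, Z j ω = z j} ∩ {ω | Λ ω = l}))
            ((mCset Fs).inter (mTZ.inter (mLm l))) mX,
          ih, Finset.prod_insert hi, mul_assoc]
    have hCu : {ω : Ω | ∀ j, C j ω = c j} =
        {ω | ∀ j ∈ (Finset.univ : Finset (Fin n)), C j ω = c j} := by
      ext ω; simp
    have hCfull : P ({ω | ∀ j, C j ω = c j} ∩ ({ω | ∀ j, Z j ω = z j} ∩ {ω | Λ ω = l})) =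
        (∏ j, condProb P {ω | C j ω = c j} {ω | Z j ω = z j ∧ Λ ω = l}) *
          P ({ω | ∀ j, Z j ω = z j} ∩ {ω | Λ ω = l}) := by
      rw [hCu, hprod Finset.univ]
      congr 1
      exact Finset.prod_congr rfl fun j _ => hq j
    by_cases hfb : f l = b
    · have hLB : {ω | Λ ω = l} ⊆ {ω | ∀ k, B k ω = b k} := by
        intro ω hω k
        have hl : Λ ω = l := hω
        rw [h_vi ω k, hl, hfb]
      have hr1 : (∏ k, condProb P {ω | B k ω = b k} {ω | Λ ω = l}) = 1 := by
        apply Finset.prod_eq_one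
        intro k _
        have e : {ω | B k ω = b k} ∩ {ω | Λ ω = l} = {ω | Λ ω = l} :=
          Set.eq_of_subset_of_subset Set.inter_subset_right
            (fun ω hω => ⟨hLB hω k, hω⟩)
        show P ({ω | B k ω = b k} ∩ {ω | Λ ω = l}) / P {ω | Λ ω = l} = 1
        rw [e, ENNReal.div_self hL hLt]
      have h3 := h_iii ((b, c)) y ((z, l)) hT3pos
      rw [hTset] at h3
      have eS : {ω | ((fun k => B k ω : ∀ k, β k), (fun j => C j ω : ∀ j, χ j)) =
          ((b, c) : (∀ k, β k) × (∀ j, χ j))} =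
          {ω | (∀ k, B k ω = b k) ∧ ∀ j, C j ω = c j} := by
        ext ω; simp [Prod.ext_iff, funext_iff]
      have e1 : {ω | ((fun k => B k ω : ∀ k, β k), (fun j => C j ω : ∀ j, χ j)) =
            ((b, c) : (∀ k, β k) × (∀ j, χ j)) ∧ Y ω = y} ∩
            ({ω | ∀ j, Z j ω = z j} ∩ {ω | Λ ω = l}) =
          {ω | (∀ k, B k ω = b k) ∧ ∀ j, C j ω = c j} ∩
            {ω | Y ω = y ∧ ∀ j, Z j ω = z j} ∩ {ω | Λ ω = l} := by
        ext ω
        simp only [Set.mem_inter_iff, Set.mem_setOf_eq, Prod.ext_iff, funext_iff]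
        tauto
      have e2 : {ω | (∀ k, B k ω = b k) ∧ ∀ j, C j ω = c j} ∩
            ({ω | ∀ j, Z j ω = z j} ∩ {ω | Λ ω = l}) =
          {ω | ∀ j, C j ω = c j} ∩ ({ω | ∀ j, Z j ω = z j} ∩ {ω | Λ ω = l}) := by
        ext ω
        simp only [Set.mem_inter_iff, Set.mem_setOf_eq]
        constructor
        · rintro ⟨⟨-, hc'⟩, hT'⟩
          exact ⟨hc', hT'⟩
        · rintro ⟨hc', hT'⟩
          exact ⟨⟨hLB hT'.2, hc'⟩, hT'⟩
      have e3 : {ω | Y ω = y} ∩ ({ω | ∀ j, Z j ω = z j} ∩ {ω | Λ ω = l}) =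
          {ω | Y ω = y ∧ ∀ j, Z j ω = z j} ∩ {ω | Λ ω = l} := by
        ext ω
        simp only [Set.mem_inter_iff, Set.mem_setOf_eq]
        tauto
      have h7 : P ({ω | (∀ k, B k ω = b k) ∧ ∀ j, C j ω = c j} ∩
            {ω | Y ω = y ∧ ∀ j, Z j ω = z j} ∩ {ω | Λ ω = l}) =
          condProb P {ω | ((fun k => B k ω : ∀ k, β k), (fun j => C j ω : ∀ j, χ j)) =
              ((b, c) : (∀ k, β k) × (∀ j, χ j))}
            ({ω | ∀ j, Z j ω = z j} ∩ {ω | Λ ω = l}) *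
            P ({ω | Y ω = y ∧ ∀ j, Z j ω = z j} ∩ {ω | Λ ω = l}) := by
        rw [← e1, ← condProb_mul_self P _ _ hD0, h3, mul_assoc,
          condProb_mul_self P _ _ hD0, e3]
      have h8 : condProb P {ω | ((fun k => B k ω : ∀ k, β k),
            (fun j => C j ω : ∀ j, χ j)) = ((b, c) : (∀ k, β k) × (∀ j, χ j))}
            ({ω | ∀ j, Z j ω = z j} ∩ {ω | Λ ω = l}) =
          ∏ j, condProb P {ω | C j ω = c j} {ω | Z j ω = z j ∧ Λ ω = l} := by
        show P _ / _ = _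
        rw [eS, e2, hCfull, ennreal_mul_div_cancel _ _ hD0 hDt]
      rw [h7, h8, hEL l, hr1]
      ring
    · obtain ⟨k, hk⟩ : ∃ k, f l k ≠ b k := by
        by_contra h
        push_neg at h
        exact hfb (funext h)
      have hzero : P ({ω | (∀ k, B k ω = b k) ∧ ∀ j, C j ω = c j} ∩
          {ω | Y ω = y ∧ ∀ j, Z j ω = z j} ∩ {ω | Λ ω = l}) = 0 := by
        have hsub : {ω | (∀ k, B k ω = b k) ∧ ∀ j, C j ω = c j} ∩
            {ω | Y ω = y ∧ ∀ j, Z j ω = z j} ∩ {ω | Λ ω = l} ⊆ (∅ : Set Ω) := by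
          rintro ω ⟨⟨⟨hBall, -⟩, -⟩, hl⟩
          have hl' : Λ ω = l := hl
          have : f l k = b k := by rw [← hl', ← h_vi ω k]; exact hBall k
          exact (hk this).elim
        exact measure_mono_null hsub measure_empty
      rw [hzero]
      have hz2 : (∏ k', condProb P {ω | B k' ω = b k'} {ω | Λ ω = l}) = 0 := by
        apply Finset.prod_eq_zero (Finset.mem_univ k)
        have e : {ω | B k ω = b k} ∩ {ω | Λ ω = l} = ∅ := by
          ext ω
          simp only [Set.mem_inter_iff, Set.mem_setOf_eq, Set.mem_empty_iff_false,
            iff_false, not_and]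
          intro hb' hl
          have : f l k = b k := by rw [← hl, ← h_vi ω k]; exact hb'
          exact hk this
        show P ({ω | B k ω = b k} ∩ {ω | Λ ω = l}) / P {ω | Λ ω = l} = 0
        rw [e, measure_empty, ENNReal.zero_div]
      rw [hz2, mul_zero, zero_mul]
  show P ({ω | (∀ k, B k ω = b k) ∧ ∀ j, C j ω = c j} ∩
      {ω | Y ω = y ∧ ∀ j, Z j ω = z j}) / P {ω | Y ω = y ∧ ∀ j, Z j ω = z j} = _
  rw [partition_sum P Λ ({ω | (∀ k, B k ω = b k) ∧ ∀ j, C j ω = c j} ∩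
    {ω | Y ω = y ∧ ∀ j, Z j ω = z j}) (mS.inter mE) mLm]
  have hsum : (∑ l : γ, P ({ω | (∀ k, B k ω = b k) ∧ ∀ j, C j ω = c j} ∩
      {ω | Y ω = y ∧ ∀ j, Z j ω = z j} ∩ {ω | Λ ω = l})) =
    (∑ l ∈ Finset.univ.filter (fun l : γ => 0 < P {ω | Λ ω = l}),
      P {ω | Λ ω = l} *
        (∏ j, condProb P {ω | C j ω = c j} {ω | Z j ω = z j ∧ Λ ω = l}) *
        (∏ k, condProb P {ω | B k ω = b k} {ω | Λ ω = l})) *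
      P {ω | Y ω = y ∧ ∀ j, Z j ω = z j} := by
    rw [Finset.sum_mul, Finset.sum_filter]
    exact Finset.sum_congr rfl fun l _ => key l
  rw [hsum, ennreal_mul_div_cancel _ _ hE0 (hPt _)]
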